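/- The Lie algebra h is nilpotent of class exactly 2: its derived subalgebra ⁅h, h⁆ equals the one-dimensional span ℂ·X3, this span is contained in the center of h (i.e. ⁅X, Y⁆ = 0 for every X ∈ h and Y ∈ ℂ·X3), and ⁅h, h⁆ ≠ 0. -/

import Mathlib

open Matrix

noncomputable section

def X1 (α β : ℂ) : Matrix (Fin 4) (Fin 4) ℂ :=
  !![1,1,0,1; 1,1,0,0; α,β,0,0; 0,0,0,0]

def X2 (α β : ℂ) : Matrix (Fin 4) (Fin 4) ℂ :=
  !![1,1,0,0; 1,1,0,1; β-1,α+1,0,0; 0,0,0,0]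

def X3 : Matrix (Fin 4) (Fin 4) ℂ :=
  !![0,0,0,0; 0,0,0,0; 0,0,0,1; 0,0,0,0]

/-- The ℂ-linear span of {X1, X2, X3}. -/
def h (α β : ℂ) : Submodule ℂ (Matrix (Fin 4) (Fin 4) ℂ) :=
  Submodule.span ℂ {X1 α β, X2 α β, X3}

section

attribute [local instance] LieRing.ofAssociativeRing

lemma lie12 (α β : ℂ) : ⁅X1 α β, X2 α β⁆ = X3 := by
  show X1 α β * X2 α β - X2 α β * X1 α β = X3
  ext i j
  fin_cases i <;> fin_cases j <;>
    simp [X1, X2, X3, Matrix.mul_apply, Fin.sum_univ_four, Matrix.vecHead, Matrix.vecTail] <;> ring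

lemma lie13 (α β : ℂ) : ⁅X1 α β, X3⁆ = 0 := by
  show X1 α β * X3 - X3 * X1 α β = 0
  ext i j
  fin_cases i <;> fin_cases j <;>
    simp [X1, X3, Matrix.mul_apply, Fin.sum_univ_four]

lemma lie23 (α β : ℂ) : ⁅X2 α β, X3⁆ = 0 := by
  show X2 α β * X3 - X3 * X2 α β = 0
  ext i j
  fin_cases i <;> fin_cases j <;>
    simp [X2, X3, Matrix.mul_apply, Fin.sum_univ_four]

lemma lieX3 (α β : ℂ) : ∀ X ∈ h α β, ⁅X, X3⁆ = 0 := by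
  intro X hX
  induction hX using Submodule.span_induction with
  | mem x hx =>
    rcases hx with rfl | rfl | rfl
    · exact lie13 α β
    · exact lie23 α β
    · exact lie_self _
  | zero => exact zero_lie _
  | add x y _ _ hx hy => rw [add_lie, hx, hy, add_zero]
  | smul c x _ hx => rw [smul_lie, hx, smul_zero]

lemma lie_mem (α β : ℂ) : ∀ A ∈ h α β, ∀ B ∈ h α β,
    ⁅A, B⁆ ∈ Submodule.span ℂ ({X3} : Set (Matrix (Fin 4) (Fin 4) ℂ)) := by
  have base : ∀ A ∈ h α β, ∀ B ∈ ({X1 α β, X2 α β, X3} : Set (Matrix (Fin 4) (Fin 4) ℂ)),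
      ⁅A, B⁆ ∈ Submodule.span ℂ ({X3} : Set (Matrix (Fin 4) (Fin 4) ℂ)) := by
    intro A hA B hB
    induction hA using Submodule.span_induction with
    | mem x hx =>
      rcases hx with rfl | rfl | rfl <;> rcases hB with rfl | rfl | rfl
      · rw [lie_self]; exact Submodule.zero_mem _
      · rw [lie12]; exact Submodule.mem_span_singleton_self _
      · rw [lie13]; exact Submodule.zero_mem _
      · rw [← lie_skew, lie12]; exact Submodule.neg_mem _ (Submodule.mem_span_singleton_self _)
      · rw [lie_self]; exact Submodule.zero_mem _
      · rw [lie23]; exact Submodule.zero_mem _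
      · rw [← lie_skew, lie13, neg_zero]; exact Submodule.zero_mem _
      · rw [← lie_skew, lie23, neg_zero]; exact Submodule.zero_mem _
      · rw [lie_self]; exact Submodule.zero_mem _
    | zero => rw [zero_lie]; exact Submodule.zero_mem _
    | add x y _ _ hx hy => rw [add_lie]; exact Submodule.add_mem _ hx hy
    | smul c x _ hx => rw [smul_lie]; exact Submodule.smul_mem _ _ hx
  intro A hA B hB
  induction hB using Submodule.span_induction with
  | mem x hx => exact base A hA x hx
  | zero => rw [lie_zero]; exact Submodule.zero_mem _
  | add x y _ _ hx hy => rw [lie_add]; exact Submodule.add_mem _ hx hy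
  | smul c x _ hx => rw [lie_smul]; exact Submodule.smul_mem _ _ hx

end

/-- h is nilpotent of class exactly 2: ⁅h,h⁆ = ℂ·X3, this span is central in h,
and ⁅h,h⁆ ≠ 0. -/
theorem h_nilpotent_class_two (α β : ℂ) :
    Submodule.span ℂ {Z : Matrix (Fin 4) (Fin 4) ℂ | ∃ A ∈ h α β, ∃ B ∈ h α β, Z = ⁅A, B⁆}
      = Submodule.span ℂ {X3} ∧
    (∀ X ∈ h α β, ∀ Y ∈ Submodule.span ℂ ({X3} : Set (Matrix (Fin 4) (Fin 4) ℂ)), ⁅X, Y⁆ = 0) ∧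
    Submodule.span ℂ ({X3} : Set (Matrix (Fin 4) (Fin 4) ℂ)) ≠ ⊥ := by
  letI : LieRing (Matrix (Fin 4) (Fin 4) ℂ) := LieRing.ofAssociativeRing
  have hX1 : X1 α β ∈ h α β := Submodule.subset_span (by simp)
  have hX2 : X2 α β ∈ h α β := Submodule.subset_span (by simp)
  refine ⟨le_antisymm ?_ ?_, ?_, ?_⟩
  · rw [Submodule.span_le]
    rintro Z ⟨A, hA, B, hB, rfl⟩
    exact lie_mem α β A hA B hB
  · apply Submodule.span_mono
    rintro Z rfl
    exact ⟨X1 α β, hX1, X2 α β, hX2, (lie12 α β).symm⟩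
  · intro X hX Y hY
    rcases Submodule.mem_span_singleton.mp hY with ⟨c, rfl⟩
    rw [lie_smul, lieX3 α β X hX, smul_zero]
  · intro hbot
    have h3 : X3 ∈ (⊥ : Submodule ℂ (Matrix (Fin 4) (Fin 4) ℂ)) :=
      hbot ▸ Submodule.mem_span_singleton_self X3
    have : X3 = 0 := by simpa using h3
    have := congrFun (congrFun this 2) 3
    simp [X3] at this
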